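/- Fix a real number λ ≠ 0. For every integer n ≥ 0 and every real x, the degenerate falling factorial satisfies (x)_{n,λ} = Σ_{m=0}^{n} J_{m,λ}(x) S^{(1)}_{J,λ}(n,m). -/

import Mathlib

open Finset

/-- The degenerate falling factorial `(x)_{n,λ} = x(x−λ)⋯(x−(n−1)λ)`;
for `lam = 1` it is the ordinary falling factorial `(x)_n`. -/
noncomputable def dff (lam : ℝ) (n : ℕ) (x : ℝ) : ℝ :=
  ∏ i ∈ Finset.range n, (x - i * lam)

/-- The degenerate exponential `e_λ^x(t) = Σ_{n≥0} (x)_{n,λ} t^n/n!`. -/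
noncomputable def degExp (lam x : ℝ) : PowerSeries ℝ :=
  PowerSeries.mk fun n => dff lam n x / n.factorial

/-- The degenerate logarithm `log_λ(1+t) = Σ_{n≥1} λ^{n−1}(1)_{n,1/λ} t^n/n!`. -/
noncomputable def degLog (lam : ℝ) : PowerSeries ℝ :=
  PowerSeries.mk fun n =>
    if n = 0 then 0 else lam ^ (n - 1) * dff (1 / lam) n 1 / n.factorial

/-- Composition `f(g(t))` of formal power series (valid definition of composition
when `g` has zero constant term, as in all uses below). -/
noncomputable def pscomp (f g : PowerSeries ℝ) : PowerSeries ℝ :=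
  PowerSeries.mk fun n =>
    ∑ k ∈ Finset.range (n + 1), (PowerSeries.coeff k f) * (PowerSeries.coeff n (g ^ k))

namespace PSAux

open PowerSeries Polynomial

lemma coeff_pow_of_lt {h : PowerSeries ℝ} (hh : constantCoeff h = 0) {n k : ℕ}
    (hnk : n < k) : coeff n (h ^ k) = 0 := by
  have hx : (PowerSeries.X : PowerSeries ℝ) ∣ h := X_dvd_iff.mpr hh
  have hdvd : (PowerSeries.X : PowerSeries ℝ) ^ k ∣ h ^ k := pow_dvd_pow_of_dvd hx k
  exact PowerSeries.X_pow_dvd_iff.mp hdvd n hnk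

lemma coeff_pscomp {h : PowerSeries ℝ} (hh : constantCoeff h = 0) (f : PowerSeries ℝ)
    {n N : ℕ} (hn : n < N) :
    coeff n (pscomp f h) = ∑ k ∈ Finset.range N, coeff k f * coeff n (h ^ k) := by
  rw [pscomp, coeff_mk]
  apply Finset.sum_subset
  · intro k hk
    simp only [Finset.mem_range] at *
    omega
  · intro k _ hk'
    have hnk : n < k := by
      simp only [Finset.mem_range] at hk'
      omega
    rw [coeff_pow_of_lt hh hnk, mul_zero]

lemma constantCoeff_pscomp (f h : PowerSeries ℝ) :
    constantCoeff (pscomp f h) = constantCoeff f := by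
  rw [← PowerSeries.coeff_zero_eq_constantCoeff_apply, ← PowerSeries.coeff_zero_eq_constantCoeff_apply, pscomp, coeff_mk]
  simp

/-- Evaluation of a polynomial at a power series. -/
noncomputable def evp (h : PowerSeries ℝ) (p : Polynomial ℝ) : PowerSeries ℝ :=
  Polynomial.eval₂ PowerSeries.C h p

lemma coeff_pscomp_evp {h : PowerSeries ℝ} (hh : constantCoeff h = 0) (f : PowerSeries ℝ)
    {n N : ℕ} (hn : n < N) :
    coeff n (pscomp f h) = coeff n (evp h (trunc N f)) := by
  rw [coeff_pscomp hh f hn, evp, eval₂_trunc_eq_sum_range, map_sum]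
  refine Finset.sum_congr rfl fun k _ => ?_
  rw [PowerSeries.coeff_C_mul]

lemma coeff_eq_of_X_pow_dvd {a b : PowerSeries ℝ} {N : ℕ}
    (hd : (PowerSeries.X : PowerSeries ℝ) ^ N ∣ a - b) {n : ℕ} (hn : n < N) :
    coeff n a = coeff n b := by
  have := PowerSeries.X_pow_dvd_iff.mp hd n hn
  rw [map_sub] at this
  linarith

lemma X_pow_dvd_evp {h : PowerSeries ℝ} (hh : constantCoeff h = 0) {N : ℕ}
    {p : Polynomial ℝ} (hp : (Polynomial.X : Polynomial ℝ) ^ N ∣ p) :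
    (PowerSeries.X : PowerSeries ℝ) ^ N ∣ evp h p := by
  obtain ⟨q, rfl⟩ := hp
  rw [evp, eval₂_mul, eval₂_pow, Polynomial.eval₂_X]
  exact Dvd.dvd.mul_right (pow_dvd_pow_of_dvd (X_dvd_iff.mpr hh) N) _

lemma pscomp_add (f g h : PowerSeries ℝ) :
    pscomp (f + g) h = pscomp f h + pscomp g h := by
  ext n
  rw [map_add, pscomp, pscomp, pscomp, coeff_mk, coeff_mk, coeff_mk, ← Finset.sum_add_distrib]
  refine Finset.sum_congr rfl fun k _ => ?_
  rw [map_add, add_mul]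

lemma pscomp_sub (f g h : PowerSeries ℝ) :
    pscomp (f - g) h = pscomp f h - pscomp g h := by
  ext n
  rw [map_sub, pscomp, pscomp, pscomp, coeff_mk, coeff_mk, coeff_mk, ← Finset.sum_sub_distrib]
  refine Finset.sum_congr rfl fun k _ => ?_
  rw [map_sub, sub_mul]

lemma pscomp_C (a : ℝ) (h : PowerSeries ℝ) : pscomp (PowerSeries.C a) h = PowerSeries.C a := by
  ext n
  rw [pscomp, coeff_mk]
  rcases Nat.eq_zero_or_pos n with rfl | hn
  · simp
  · rw [PowerSeries.coeff_C, if_neg hn.ne']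
    apply Finset.sum_eq_zero
    intro k hk
    rcases Nat.eq_zero_or_pos k with rfl | hk0
    · simp [PowerSeries.coeff_C, hn.ne']
    · rw [PowerSeries.coeff_C, if_neg hk0.ne', zero_mul]

lemma pscomp_one (h : PowerSeries ℝ) : pscomp 1 h = 1 := by
  have := pscomp_C 1 h
  simpa using this

lemma pscomp_X {h : PowerSeries ℝ} (hh : constantCoeff h = 0) :
    pscomp PowerSeries.X h = h := by
  ext n
  rcases Nat.eq_zero_or_pos n with rfl | hn
  · rw [pscomp, coeff_mk]
    simpa using hh.symm
  · rw [coeff_pscomp hh _ (show n < n + 1 by omega), Finset.sum_eq_single 1]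
    · simp
    · intro k _ hk1
      rw [PowerSeries.coeff_X, if_neg hk1, zero_mul]
    · intro hmem
      exact absurd (Finset.mem_range.mpr (by omega)) (fun h' => hmem h')

lemma pscomp_X_right (f : PowerSeries ℝ) : pscomp f PowerSeries.X = f := by
  ext n
  rw [pscomp, coeff_mk, Finset.sum_eq_single n]
  · simp
  · intro k _ hk
    rw [PowerSeries.coeff_X_pow, if_neg (fun h' => hk h'.symm), mul_zero]
  · intro hmem
    exact absurd (Finset.mem_range.mpr (by omega)) hmem

lemma pscomp_mul {h : PowerSeries ℝ} (hh : constantCoeff h = 0) (f g : PowerSeries ℝ) :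
    pscomp (f * g) h = pscomp f h * pscomp g h := by
  ext n
  set N := n + 1 with hN
  have hn : n < N := by omega
  have key : coeff n (pscomp (f * g) h) = coeff n (evp h (trunc N f) * evp h (trunc N g)) := by
    rw [coeff_pscomp_evp hh (f * g) hn,
      show evp h (trunc N f) * evp h (trunc N g) = evp h (trunc N f * trunc N g) from
        (eval₂_mul _ _).symm]
    apply coeff_eq_of_X_pow_dvd (N := N) _ hn
    rw [show evp h (trunc N (f * g)) - evp h (trunc N f * trunc N g)
        = evp h (trunc N (f * g) - trunc N f * trunc N g) by rw [evp, evp, evp, eval₂_sub]]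
    apply X_pow_dvd_evp hh
    rw [Polynomial.X_pow_dvd_iff]
    intro d hd
    rw [Polynomial.coeff_sub, PowerSeries.coeff_trunc, if_pos hd, Polynomial.coeff_mul,
      PowerSeries.coeff_mul, sub_eq_zero]
    refine Finset.sum_congr rfl fun p hp => ?_
    have h1 : p.1 < N := lt_of_le_of_lt (Finset.HasAntidiagonal.antidiagonal.fst_le hp) hd
    have h2 : p.2 < N := lt_of_le_of_lt (Finset.HasAntidiagonal.antidiagonal.snd_le hp) hd
    rw [PowerSeries.coeff_trunc, if_pos h1, PowerSeries.coeff_trunc, if_pos h2]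
  rw [key, PowerSeries.coeff_mul, PowerSeries.coeff_mul]
  refine Finset.sum_congr rfl fun p hp => ?_
  have h1 : p.1 < N := by
    have := Finset.HasAntidiagonal.antidiagonal.fst_le hp; omega
  have h2 : p.2 < N := by
    have := Finset.HasAntidiagonal.antidiagonal.snd_le hp; omega
  rw [coeff_pscomp_evp hh f h1, coeff_pscomp_evp hh g h2]

lemma pscomp_pow {h : PowerSeries ℝ} (hh : constantCoeff h = 0) (f : PowerSeries ℝ) (k : ℕ) :
    pscomp (f ^ k) h = (pscomp f h) ^ k := by
  induction k with
  | zero => simpa using pscomp_one h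
  | succ k ih => rw [pow_succ, pow_succ, pscomp_mul hh, ih]

lemma pscomp_assoc {g h : PowerSeries ℝ} (hg : constantCoeff g = 0)
    (hh : constantCoeff h = 0) (f : PowerSeries ℝ) :
    pscomp (pscomp f g) h = pscomp f (pscomp g h) := by
  have hgh : constantCoeff (pscomp g h) = 0 := by rw [constantCoeff_pscomp, hg]
  ext n
  have hn : n < n + 1 := by omega
  rw [coeff_pscomp hh (pscomp f g) hn, coeff_pscomp hgh f hn]
  symm
  calc ∑ k ∈ Finset.range (n + 1), coeff k f * coeff n ((pscomp g h) ^ k)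
      = ∑ k ∈ Finset.range (n + 1), coeff k f *
          ∑ j ∈ Finset.range (n + 1), coeff j (g ^ k) * coeff n (h ^ j) := by
        refine Finset.sum_congr rfl fun k _ => ?_
        rw [← pscomp_pow hh, coeff_pscomp hh (g ^ k) hn]
    _ = ∑ j ∈ Finset.range (n + 1),
          (∑ k ∈ Finset.range (n + 1), coeff k f * coeff j (g ^ k)) * coeff n (h ^ j) := by
        simp_rw [Finset.mul_sum, Finset.sum_mul]
        rw [Finset.sum_comm]
        exact Finset.sum_congr rfl fun j _ => Finset.sum_congr rfl fun k _ => by ring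
    _ = ∑ j ∈ Finset.range (n + 1), coeff j (pscomp f g) * coeff n (h ^ j) := by
        refine Finset.sum_congr rfl fun j hj => ?_
        rw [coeff_pscomp hg f (Finset.mem_range.mp hj)]

lemma coeff_X_mul_derivative (f : PowerSeries ℝ) (n : ℕ) :
    coeff n (PowerSeries.X * d⁄dX ℝ f) = n * coeff n f := by
  cases n with
  | zero =>
      simp [PowerSeries.coeff_zero_eq_constantCoeff, map_mul]
  | succ n =>
      rw [PowerSeries.coeff_succ_X_mul, PowerSeries.coeff_derivative]
      push_cast
      ring

lemma derivative_evp (h : PowerSeries ℝ) (p : Polynomial ℝ) :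
    d⁄dX ℝ (evp h p) = evp h (Polynomial.derivative p) * d⁄dX ℝ h := by
  induction p using Polynomial.induction_on with
  | C a => simp [evp]
  | add p q hp hq =>
      rw [show evp h (p + q) = evp h p + evp h q from eval₂_add _ _, map_add, hp, hq,
        Polynomial.derivative_add,
        show evp h (Polynomial.derivative p + Polynomial.derivative q)
          = evp h (Polynomial.derivative p) + evp h (Polynomial.derivative q) from
          eval₂_add _ _, add_mul]
  | monomial k a _ =>
      rw [evp, eval₂_mul, Polynomial.eval₂_C, eval₂_pow, Polynomial.eval₂_X, Polynomial.derivative_C_mul,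
        Polynomial.derivative_X_pow, evp, eval₂_mul, eval₂_mul, Polynomial.eval₂_C, Polynomial.eval₂_C,
        eval₂_pow, Polynomial.eval₂_X, Derivation.leibniz, PowerSeries.derivative_C, smul_zero, add_zero,
        Derivation.leibniz_pow]
      simp only [smul_eq_mul, nsmul_eq_mul, map_natCast]
      push_cast
      ring

lemma pscomp_derivative {h : PowerSeries ℝ} (hh : constantCoeff h = 0) (f : PowerSeries ℝ) :
    d⁄dX ℝ (pscomp f h) = pscomp (d⁄dX ℝ f) h * d⁄dX ℝ h := by
  ext n
  have e1 : coeff n (d⁄dX ℝ (pscomp f h))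
      = coeff n (d⁄dX ℝ (evp h (trunc (n + 2) f))) := by
    rw [PowerSeries.coeff_derivative, PowerSeries.coeff_derivative,
      coeff_pscomp_evp hh f (show n + 1 < n + 2 by omega)]
  rw [e1, derivative_evp, PowerSeries.coeff_mul, PowerSeries.coeff_mul]
  refine Finset.sum_congr rfl fun p hp => ?_
  have h1 : p.1 < n + 1 := by
    have := Finset.HasAntidiagonal.antidiagonal.fst_le hp; omega
  have htr : trunc (n + 1) (d⁄dX ℝ f) = Polynomial.derivative (trunc (n + 2) f) :=
    PowerSeries.trunc_derivative f (n + 1)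
  rw [coeff_pscomp_evp hh (d⁄dX ℝ f) h1, htr]

lemma dff_succ (lam : ℝ) (n : ℕ) (x : ℝ) :
    dff lam (n + 1) x = dff lam n x * (x - n * lam) := Finset.prod_range_succ _ _

lemma coeff_degExp (lam x : ℝ) (n : ℕ) :
    coeff n (degExp lam x) = dff lam n x / n.factorial := by
  rw [degExp, coeff_mk]

lemma constantCoeff_degExp (lam x : ℝ) : constantCoeff (degExp lam x) = 1 := by
  rw [← PowerSeries.coeff_zero_eq_constantCoeff_apply, coeff_degExp]
  simp [dff]

lemma coeff_degLog (lam : ℝ) (n : ℕ) :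
    coeff n (degLog lam)
      = if n = 0 then 0 else lam ^ (n - 1) * dff (1 / lam) n 1 / n.factorial := by
  rw [degLog, coeff_mk]

lemma constantCoeff_degLog (lam : ℝ) : constantCoeff (degLog lam) = 0 := by
  rw [← PowerSeries.coeff_zero_eq_constantCoeff_apply, coeff_degLog]
  simp

lemma degExp_ode (lam : ℝ) :
    (1 + PowerSeries.C lam * PowerSeries.X) * d⁄dX ℝ (degExp lam 1) = degExp lam 1 := by
  ext n
  rw [add_mul, one_mul, map_add, mul_assoc, PowerSeries.coeff_C_mul,
    coeff_X_mul_derivative, PowerSeries.coeff_derivative]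
  simp only [coeff_degExp]
  rw [dff_succ]
  have h1 : (n.factorial : ℝ) ≠ 0 := Nat.cast_ne_zero.mpr n.factorial_ne_zero
  have h2 : ((n + 1).factorial : ℝ) = (n + 1) * n.factorial := by
    push_cast [Nat.factorial_succ]; ring
  field_simp [h2]
  rw [h2]
  ring

lemma degLog_ode (lam : ℝ) (hlam : lam ≠ 0) :
    (1 + PowerSeries.X) * d⁄dX ℝ (degLog lam)
      = 1 + PowerSeries.C lam * degLog lam := by
  ext n
  rw [add_mul, one_mul, map_add, map_add, PowerSeries.coeff_C_mul,
    coeff_X_mul_derivative, PowerSeries.coeff_derivative]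
  simp only [coeff_degLog]
  cases n with
  | zero => norm_num [dff]
  | succ m =>
      rw [if_neg (Nat.succ_ne_zero _), if_neg (Nat.succ_ne_zero _), PowerSeries.coeff_one,
        if_neg (Nat.succ_ne_zero _), show m + 1 + 1 - 1 = m + 1 from rfl,
        show m + 1 - 1 = m from rfl, dff_succ]
      have h1 : ((m + 1).factorial : ℝ) ≠ 0 := Nat.cast_ne_zero.mpr (m+1).factorial_ne_zero
      have h2 : ((m + 1 + 1).factorial : ℝ) = (m + 2) * (m + 1).factorial := by
        push_cast [Nat.factorial_succ]; ring
      have h3 : (lam : ℝ) ^ (m + 1) = lam ^ m * lam := pow_succ lam m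
      field_simp [h2]
      rw [h2]
      push_cast
      ring

lemma pscomp_degExp_degLog (lam : ℝ) (hlam : lam ≠ 0) :
    pscomp (degExp lam 1) (degLog lam) = 1 + PowerSeries.X := by
  set E := degExp lam 1 with hE
  set L := degLog lam with hL
  have hL0 : constantCoeff L = 0 := constantCoeff_degLog lam
  set A := pscomp E L with hA
  have hDA : d⁄dX ℝ A = pscomp (d⁄dX ℝ E) L * d⁄dX ℝ L := pscomp_derivative hL0 E
  have hcompE : (1 + PowerSeries.C lam * L) * pscomp (d⁄dX ℝ E) L = A := by
    have h0 := congrArg (fun f => pscomp f L) (degExp_ode lam)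
    simpa [pscomp_mul hL0, pscomp_add, pscomp_one, pscomp_C, pscomp_X hL0] using h0
  have hunit : (1 + PowerSeries.C lam * L) ≠ 0 := by
    intro h0
    have h1 := congrArg (PowerSeries.constantCoeff) h0
    simp [hL0] at h1
  have hkey : (1 + PowerSeries.C lam * L) * ((1 + PowerSeries.X) * d⁄dX ℝ A)
      = (1 + PowerSeries.C lam * L) * A := by
    calc (1 + PowerSeries.C lam * L) * ((1 + PowerSeries.X) * d⁄dX ℝ A)
        = ((1 + PowerSeries.C lam * L) * pscomp (d⁄dX ℝ E) L)
            * ((1 + PowerSeries.X) * d⁄dX ℝ L) := by rw [hDA]; ring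
      _ = A * (1 + PowerSeries.C lam * L) := by rw [hcompE, degLog_ode lam hlam]
      _ = (1 + PowerSeries.C lam * L) * A := mul_comm _ _
  have hode : (1 + PowerSeries.X) * d⁄dX ℝ A = A := mul_left_cancel₀ hunit hkey
  have hA0 : coeff 0 A = 1 := by
    rw [PowerSeries.coeff_zero_eq_constantCoeff_apply, hA, constantCoeff_pscomp, hE,
      constantCoeff_degExp]
  have hrec : ∀ n : ℕ, coeff (n + 1) A * (n + 1) + n * coeff n A = coeff n A := by
    intro n
    have h0 := congrArg (PowerSeries.coeff n) hode
    rwa [add_mul, one_mul, map_add, coeff_X_mul_derivative, PowerSeries.coeff_derivative]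
      at h0
  have hA1 : coeff 1 A = 1 := by
    have h0 := hrec 0
    rw [hA0] at h0
    push_cast at h0
    linarith
  have hA2 : ∀ n, 2 ≤ n → coeff n A = 0 := by
    intro n hn
    induction n, hn using Nat.le_induction with
    | base =>
        have h0 := hrec 1
        rw [hA1] at h0
        push_cast at h0
        linarith
    | succ n hn ih =>
        have h0 := hrec n
        rw [ih] at h0
        have hne : ((n : ℝ) + 1) ≠ 0 := by positivity
        push_cast at h0
        have : coeff (n + 1) A * ((n : ℝ) + 1) = 0 := by linarith
        exact (mul_eq_zero.mp this).resolve_right hne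
  ext n
  rcases Nat.lt_or_ge n 2 with hn | hn
  · interval_cases n
    · simpa using hA0
    · simpa using hA1
  · rw [hA2 n hn, map_add, PowerSeries.coeff_one, PowerSeries.coeff_X,
      if_neg (by omega : ¬ n = 0), if_neg (by omega : ¬ n = 1), add_zero]

end PSAux

open PSAux PowerSeries in
theorem degenerate_falling_via_jindalrae_jindalrae1 (lam : ℝ) (hlam : lam ≠ 0)
    (SJ1 : ℕ → ℕ → ℝ) (J : ℕ → ℝ → ℝ)
    (hSJ1 : ∀ k : ℕ, (PowerSeries.C ((k.factorial : ℝ))⁻¹) * (pscomp (degLog lam) (degLog lam)) ^ k = PowerSeries.mk (fun n => if k ≤ n then SJ1 n k / n.factorial else 0))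
    (hJ : ∀ x : ℝ, pscomp (degExp lam x) (pscomp (degExp lam 1) (degExp lam 1 - 1) - 1) = PowerSeries.mk (fun n => J n x / n.factorial))
    : ∀ (n : ℕ) (x : ℝ), dff lam n x = ∑ m ∈ Finset.range (n + 1), J m x * SJ1 n m := by
  intro n x
  set L := degLog lam with hLdef
  set E := degExp lam 1 with hEdef
  set F := E - 1 with hFdef
  have hL0 : PowerSeries.constantCoeff L = 0 := constantCoeff_degLog lam
  have hF0 : PowerSeries.constantCoeff F = 0 := by
    rw [hFdef, map_sub, hEdef, constantCoeff_degExp]; simp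
  set LL := pscomp L L with hLLdef
  have hLL0 : PowerSeries.constantCoeff LL = 0 := by
    rw [hLLdef, constantCoeff_pscomp, hL0]
  have hEL : pscomp E L = 1 + PowerSeries.X := by
    rw [hEdef, hLdef]; exact pscomp_degExp_degLog lam hlam
  have hFL : pscomp F L = PowerSeries.X := by
    rw [hFdef, pscomp_sub, pscomp_one, hEL]; ring
  set G := pscomp E F - 1 with hGdef
  have hGF : G = pscomp F F := by
    rw [hGdef]
    nth_rewrite 2 [hFdef]
    rw [pscomp_sub, pscomp_one]
  have hG0 : PowerSeries.constantCoeff G = 0 := by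
    rw [hGF, constantCoeff_pscomp, hF0]
  have hFLL : pscomp F LL = L := by
    rw [hLLdef, ← pscomp_assoc hL0 hL0 F, hFL, pscomp_X hL0]
  have hGLL : pscomp G LL = PowerSeries.X := by
    rw [hGF, pscomp_assoc hF0 hLL0 F, hFLL, hFL]
  have hEx : pscomp (PowerSeries.mk fun m => J m x / m.factorial) LL = degExp lam x := by
    rw [← hJ x, pscomp_assoc hG0 hLL0 (degExp lam x), hGLL, pscomp_X_right]
  have hfac : (n.factorial : ℝ) ≠ 0 := Nat.cast_ne_zero.mpr n.factorial_ne_zero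
  have hLLk : ∀ k, k ≤ n →
      PowerSeries.coeff n (LL ^ k) = (k.factorial : ℝ) * (SJ1 n k / n.factorial) := by
    intro k hk
    have h0 := congrArg (PowerSeries.coeff n) (hSJ1 k)
    rw [PowerSeries.coeff_C_mul, PowerSeries.coeff_mk, if_pos hk] at h0
    have hkf : (k.factorial : ℝ) ≠ 0 := Nat.cast_ne_zero.mpr k.factorial_ne_zero
    field_simp at h0 ⊢
    linarith [h0]
  have hcoeff := congrArg (PowerSeries.coeff n) hEx
  rw [coeff_pscomp hLL0 _ (show n < n + 1 by omega), coeff_degExp] at hcoeff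
  have hmain : dff lam n x / n.factorial
      = ∑ m ∈ Finset.range (n + 1), J m x * SJ1 n m / n.factorial := by
    rw [← hcoeff]
    refine Finset.sum_congr rfl fun k hk => ?_
    rw [PowerSeries.coeff_mk, hLLk k (by have := Finset.mem_range.mp hk; omega)]
    · have hkf : (k.factorial : ℝ) ≠ 0 := Nat.cast_ne_zero.mpr k.factorial_ne_zero
      field_simp
  rw [← Finset.sum_div, div_eq_div_iff hfac hfac] at hmain
  exact mul_right_cancel₀ hfac hmain
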